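/- arXiv:2305.12922 — 3 statements merged into one kernel-verified Lean document; each statement's English description precedes it below -/
import Mathlib

section
/- Let X ∈ ℝ^{m×n} and Λ ∈ ℝ^{n×n} diagonal with strictly positive diagonal entries. Then every diagonal entry of (XᵀX + Λ)⁻¹Λ is at most 1; equivalently, every diagonal entry of I − (XᵀX + Λ)⁻¹Λ = (XᵀX + Λ)⁻¹(XᵀX) is nonnegative. -/
open Matrix

/-- Let X ∈ ℝ^{m×n} and Λ diagonal with strictly positive diagonal entries. Then every
diagonal entry of (XᵀX + Λ)⁻¹Λ is at most 1; equivalently, every diagonal entry of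
I − (XᵀX + Λ)⁻¹Λ = (XᵀX + Λ)⁻¹(XᵀX) is nonnegative. -/
theorem stmt6 {m n : ℕ} (X : Matrix (Fin m) (Fin n) ℝ) (d : Fin n → ℝ)
    (hd : ∀ j, 0 < d j) :
    (∀ j, ((Xᵀ * X + Matrix.diagonal d)⁻¹ * Matrix.diagonal d) j j ≤ 1) ∧
      (1 : Matrix (Fin n) (Fin n) ℝ) - (Xᵀ * X + Matrix.diagonal d)⁻¹ * Matrix.diagonal d
        = (Xᵀ * X + Matrix.diagonal d)⁻¹ * (Xᵀ * X) ∧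
      (∀ j, 0 ≤ ((Xᵀ * X + Matrix.diagonal d)⁻¹ * (Xᵀ * X)) j j) := by
  set A : Matrix (Fin n) (Fin n) ℝ := Xᵀ * X + Matrix.diagonal d with hAdef
  have hpsd : (Xᵀ * X).PosSemidef := by
    simpa using Matrix.posSemidef_conjTranspose_mul_self X
  have hApd : A.PosDef := Matrix.PosDef.posSemidef_add hpsd (Matrix.posDef_diagonal_iff.mpr hd)
  have hAinv : A⁻¹ * A = 1 :=
    Matrix.nonsing_inv_mul A ((Matrix.isUnit_iff_isUnit_det A).1 hApd.isUnit)
  have hAinv' : A * A⁻¹ = 1 :=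
    Matrix.mul_nonsing_inv A ((Matrix.isUnit_iff_isUnit_det A).1 hApd.isUnit)
  have hsym : A⁻¹ᵀ = A⁻¹ := by
    have := hApd.inv.isHermitian
    simpa [Matrix.IsHermitian, Matrix.conjTranspose_eq_transpose_of_trivial] using this
  have hsplit : (1 : Matrix (Fin n) (Fin n) ℝ) - A⁻¹ * Matrix.diagonal d
      = A⁻¹ * (Xᵀ * X) := by
    rw [← hAinv, hAdef, mul_add]
    abel
  -- Key inequality: d j * A⁻¹ j j ≤ 1
  have key : ∀ j, d j * A⁻¹ j j ≤ 1 := by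
    intro j
    set v : Fin n → ℝ := A⁻¹ *ᵥ Pi.single j 1 with hv
    have hvj : v j = A⁻¹ j j := by
      simp [hv, Matrix.mulVec_single]
    have hvk : ∀ k, v k = A⁻¹ j k := by
      intro k
      have h : v k = A⁻¹ k j := by simp [hv, Matrix.mulVec_single]
      have h2 : A⁻¹ k j = A⁻¹ j k := by
        simpa [Matrix.transpose_apply] using (congrFun (congrFun hsym k) j).symm
      rw [h, h2]
    -- quadratic form of v against A equals A⁻¹ j j
    have hquad : v ⬝ᵥ (A *ᵥ v) = A⁻¹ j j := by
      have : A *ᵥ v = Pi.single j 1 := by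
        rw [hv, Matrix.mulVec_mulVec, hAinv', Matrix.one_mulVec]
      rw [this]
      simp [dotProduct, Pi.single_apply, hvj]
    have hsplitq : v ⬝ᵥ (A *ᵥ v) = v ⬝ᵥ ((Xᵀ * X) *ᵥ v) + v ⬝ᵥ (Matrix.diagonal d *ᵥ v) := by
      rw [hAdef, Matrix.add_mulVec, dotProduct_add]
    have h1 : 0 ≤ v ⬝ᵥ ((Xᵀ * X) *ᵥ v) := by
      have := hpsd.dotProduct_mulVec_nonneg v
      simpa using this
    have h2 : d j * (v j) ^ 2 ≤ v ⬝ᵥ (Matrix.diagonal d *ᵥ v) := by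
      have : v ⬝ᵥ (Matrix.diagonal d *ᵥ v) = ∑ k, d k * (v k) ^ 2 := by
        simp [dotProduct, Matrix.mulVec_diagonal]
        congr 1; ext k; ring
      rw [this]
      exact Finset.single_le_sum (f := fun k => d k * (v k) ^ 2)
        (fun k _ => mul_nonneg (hd k).le (sq_nonneg _)) (Finset.mem_univ j)
    have hineq : d j * (A⁻¹ j j) ^ 2 ≤ A⁻¹ j j := by
      rw [← hvj]
      have h3 : v j = v ⬝ᵥ (Xᵀ * X) *ᵥ v + v ⬝ᵥ Matrix.diagonal d *ᵥ v := by
        rw [← hsplitq, hquad, hvj]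
      linarith
    nlinarith [hineq, hd j, sq_nonneg (d j * A⁻¹ j j - 1)]
  have hdiag : ∀ j, (A⁻¹ * Matrix.diagonal d) j j = A⁻¹ j j * d j := by
    intro j; rw [Matrix.mul_diagonal]
  refine ⟨fun j => by rw [hdiag j]; linarith [key j], hsplit, fun j => ?_⟩
  have : (A⁻¹ * (Xᵀ * X)) j j = 1 - A⁻¹ j j * d j := by
    rw [← hsplit]
    simp [Matrix.sub_apply, Matrix.one_apply, hdiag j]
  rw [this]
  linarith [key j]
end

section
/- Let X ∈ ℝ^{m×n}, Λ ∈ ℝ^{n×n} diagonal with positive entries, P' = (XᵀX + Λ)⁻¹, ξ ≥ 1, and define μ_j = 0 if 1 − P'_{jj}Λ_{jj} ≤ ξ and μ_j = (1−ξ)/P'_{jj} − Λ_{jj} otherwise. Then μ = 0, i.e., the RDLAE solution (XᵀX + Λ)⁻¹(XᵀX − diagMat(μ)) equals the DLAE solution (XᵀX + Λ)⁻¹(XᵀX). -/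
open Matrix

lemma posdef_diag_pos {n : ℕ} {M : Matrix (Fin n) (Fin n) ℝ} (hM : M.PosDef) (j : Fin n) :
    0 < M j j := by
  exact hM.diag_pos

/-- (Theorem 1) With Λ = diag(d), d > 0, P' = (XᵀX + Λ)⁻¹, ξ ≥ 1 and
μⱼ = 0 if 1 − P'ⱼⱼΛⱼⱼ ≤ ξ else (1−ξ)/P'ⱼⱼ − Λⱼⱼ, we get μ = 0, so the RDLAE solution
equals the DLAE solution (XᵀX + Λ)⁻¹(XᵀX). -/
theorem stmt13 {m n : ℕ} (X : Matrix (Fin m) (Fin n) ℝ) (d : Fin n → ℝ)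
    (hd : ∀ j, 0 < d j) (P' : Matrix (Fin n) (Fin n) ℝ)
    (hP' : P' = (Xᵀ * X + Matrix.diagonal d)⁻¹)
    (ξ : ℝ) (hξ : 1 ≤ ξ) (μ : Fin n → ℝ)
    (hμ : ∀ j, μ j = if 1 - P' j j * d j ≤ ξ then 0 else (1 - ξ) / P' j j - d j) :
    μ = 0 ∧
      (Xᵀ * X + Matrix.diagonal d)⁻¹ * (Xᵀ * X - Matrix.diagonal μ)
        = (Xᵀ * X + Matrix.diagonal d)⁻¹ * (Xᵀ * X) := by
  have hA : (Xᵀ * X + Matrix.diagonal d).PosDef := by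
    have h1 : (Xᵀ * X).PosSemidef := by
      simpa using Matrix.posSemidef_conjTranspose_mul_self X
    exact Matrix.PosDef.posSemidef_add h1 (Matrix.PosDef.diagonal hd)
  have hPpos : P'.PosDef := hP' ▸ hA.inv
  have hμ0 : μ = 0 := by
    funext j
    have hdiag : 0 < P' j j := posdef_diag_pos hPpos j
    have : 1 - P' j j * d j ≤ ξ := by nlinarith [hd j]
    simp [hμ j, this]
  refine ⟨hμ0, ?_⟩
  rw [hμ0]
  rw [show Matrix.diagonal (0 : Fin n → ℝ) = 0 from Matrix.diagonal_zero, sub_zero]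
end

section
/- Let X ∈ ℝ^{m×n}, Λ ∈ ℝ^{n×n} diagonal with positive entries, P' = (XᵀX + Λ)⁻¹, and ξ = 0. With μ_j = 0 if 1 − P'_{jj}Λ_{jj} ≤ 0 and μ_j = 1/P'_{jj} − Λ_{jj} otherwise, the RDLAE solution B = (XᵀX + Λ)⁻¹(XᵀX − diagMat(μ)) has all diagonal entries ≤ 0, and in fact equals the EDLAE solution whose diagonal entries are exactly zero whenever P'_{jj}Λ_{jj} < 1. -/
open Matrix

/-- (Theorem 2) With Λ = diag(d), d > 0, P' = (XᵀX + Λ)⁻¹, ξ = 0 and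
μⱼ = 0 if 1 − P'ⱼⱼΛⱼⱼ ≤ 0 else 1/P'ⱼⱼ − Λⱼⱼ, the RDLAE solution
B = (XᵀX + Λ)⁻¹(XᵀX − diagMat(μ)) has all diagonal entries ≤ 0, and its diagonal entries
are exactly zero whenever P'ⱼⱼΛⱼⱼ < 1. -/
theorem stmt14 {m n : ℕ} (X : Matrix (Fin m) (Fin n) ℝ) (d : Fin n → ℝ)
    (hd : ∀ j, 0 < d j) (P' : Matrix (Fin n) (Fin n) ℝ)
    (hP' : P' = (Xᵀ * X + Matrix.diagonal d)⁻¹)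
    (μ : Fin n → ℝ)
    (hμ : ∀ j, μ j = if 1 - P' j j * d j ≤ 0 then 0 else 1 / P' j j - d j)
    (B : Matrix (Fin n) (Fin n) ℝ)
    (hB : B = (Xᵀ * X + Matrix.diagonal d)⁻¹ * (Xᵀ * X - Matrix.diagonal μ)) :
    (∀ j, B j j ≤ 0) ∧ (∀ j, P' j j * d j < 1 → B j j = 0) := by
  set A := Xᵀ * X + Matrix.diagonal d with hA
  have hXX : (Xᵀ * X).PosSemidef := by
    have := Matrix.posSemidef_conjTranspose_mul_self X
    simpa using this
  have hApd : A.PosDef :=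
    Matrix.PosDef.posSemidef_add hXX (Matrix.posDef_diagonal_iff.2 hd)
  have hAinv : A⁻¹.PosDef := hApd.inv
  have hAunit : IsUnit A.det := hApd.det_pos.ne'.isUnit
  have hPdiag : ∀ j, 0 < P' j j := by
    intro j; rw [hP']; exact posdef_diag_pos hAinv j
  -- B = 1 - A⁻¹ * diagonal (d + μ)
  have hBeq : B = 1 - A⁻¹ * Matrix.diagonal (fun k => d k + μ k) := by
    rw [hB]
    have : Xᵀ * X - Matrix.diagonal μ = A - Matrix.diagonal (fun k => d k + μ k) := by
      rw [hA, ← Matrix.diagonal_add]; abel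
    rw [this, Matrix.mul_sub, Matrix.nonsing_inv_mul _ hAunit]
  have hBdiag : ∀ j, B j j = 1 - P' j j * (d j + μ j) := by
    intro j
    rw [hBeq, Matrix.sub_apply, Matrix.mul_diagonal, Matrix.one_apply_eq, hP']
  have key : ∀ j, P' j j * d j < 1 → B j j = 0 := by
    intro j hj
    have hcond : ¬ (1 - P' j j * d j ≤ 0) := by linarith
    have hμj : μ j = 1 / P' j j - d j := by rw [hμ j, if_neg hcond]
    rw [hBdiag j, hμj]
    have h0 : P' j j ≠ 0 := (hPdiag j).ne'
    field_simp
    ring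
  refine ⟨fun j => ?_, key⟩
  by_cases h : 1 - P' j j * d j ≤ 0
  · have hμj : μ j = 0 := by rw [hμ j, if_pos h]
    rw [hBdiag j, hμj]; linarith
  · rw [key j (by linarith [not_le.1 h])]
end
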